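/- (Restricted column scaling) Let [I_r | D1] over a field F represent a matroid M, and let {b1,...,bk} be the edge set of a spanning forest of G(D1^#). Let (φ1,...,φk) be nonzero elements of F such that the entry of D1 at the position of bi is ±φi for each i. Then there is a matrix [I_r | D'] obtainable from [I_r | D1] by a sequence of row scalings and column scalings restricted to factors ±1, such that the entry of D' at the position of bi is φi for each i. -/

import Mathlib

open Set SimpleGraph

lemma aux_sign {V : Type*} {F : Type*} [Field F] :
    ∀ (k : ℕ) (e : Fin k → V × V),
      (∀ l, (e l).1 ≠ (e l).2) →
      Function.Injective (fun l => s((e l).1, (e l).2)) →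
      (SimpleGraph.fromEdgeSet (Set.range fun l => s((e l).1, (e l).2))).IsAcyclic →
      ∀ σ : Fin k → F, (∀ l, σ l = 1 ∨ σ l = -1) →
      ∃ f : V → F, (∀ v, f v = 1 ∨ f v = -1) ∧ ∀ l, f (e l).1 * f (e l).2 = σ l := by
  intro k
  induction k with
  | zero => intro e _ _ _ σ _; exact ⟨fun _ => 1, fun v => Or.inl rfl, fun l => l.elim0⟩
  | succ k ih =>
    intro e hne hinj hacy σ hσ
    set e' : Fin k → V × V := fun l => e l.castSucc with he'
    set G : SimpleGraph V := SimpleGraph.fromEdgeSet (Set.range fun l => s((e l).1, (e l).2)) with hG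
    set G' : SimpleGraph V := SimpleGraph.fromEdgeSet (Set.range fun l => s((e' l).1, (e' l).2)) with hG'
    have hle : G' ≤ G := by
      apply SimpleGraph.fromEdgeSet_mono
      rintro x ⟨l, rfl⟩
      exact ⟨l.castSucc, rfl⟩
    have hacy' : G'.IsAcyclic := fun v c hc => hacy (c.mapLe hle) (hc.mapLe hle)
    obtain ⟨f, hf1, hf2⟩ := ih e' (fun l => hne l.castSucc)
      (fun a b hab => by
        have := hinj hab
        exact Fin.castSucc_injective k this)
      hacy' (fun l => σ l.castSucc) (fun l => hσ l.castSucc)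
    set u := (e (Fin.last k)).1 with hu
    set v := (e (Fin.last k)).2 with hv
    -- u and v are not reachable in G'
    have hadj : G.Adj u v := by
      rw [hG, SimpleGraph.fromEdgeSet_adj]
      exact ⟨⟨Fin.last k, rfl⟩, hne (Fin.last k)⟩
    have hbridge : ¬ (G \ SimpleGraph.fromEdgeSet {s(u, v)}).Reachable u v :=
      fun h => (isAcyclic_iff_forall_adj_isBridge.mp hacy) hadj h
    have hle2 : G' ≤ G \ SimpleGraph.fromEdgeSet {s(u, v)} := by
      intro a b hab
      rw [SimpleGraph.sdiff_adj]
      refine ⟨hle hab, ?_⟩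
      rw [hG', SimpleGraph.fromEdgeSet_adj] at hab
      obtain ⟨⟨l, hl⟩, hne'⟩ := hab
      rw [SimpleGraph.fromEdgeSet_adj]
      rintro ⟨hmem, -⟩
      rw [Set.mem_singleton_iff] at hmem
      have := hinj (hl.trans hmem)
      exact absurd this (Fin.castSucc_lt_last l).ne
    have hreach : ¬ G'.Reachable u v := fun h => hbridge (h.mono hle2)
    classical
    by_cases hcase : f u * f v = σ (Fin.last k)
    · refine ⟨f, hf1, fun l => ?_⟩
      refine Fin.lastCases ?_ ?_ l
      · exact hcase
      · intro i; exact hf2 i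
    · refine ⟨fun w => if G'.Reachable u w then -f w else f w, ?_, ?_⟩
      · intro w
        dsimp only
        split
        · rcases hf1 w with h | h <;> simp [h]
        · exact hf1 w
      · intro l
        refine Fin.lastCases ?_ ?_ l
        · simp only [← hu, ← hv]
          rw [if_pos (SimpleGraph.Reachable.refl u), if_neg hreach]
          rcases hf1 u with h1 | h1 <;> rcases hf1 v with h2 | h2 <;>
            rcases hσ (Fin.last k) with h3 | h3 <;>
              simp_all <;> ring_nf <;> simp_all
        · intro i
          have hadj' : G'.Adj (e' i).1 (e' i).2 := by
            rw [hG', SimpleGraph.fromEdgeSet_adj]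
            exact ⟨⟨i, rfl⟩, hne i.castSucc⟩
          have hiff : G'.Reachable u (e' i).1 ↔ G'.Reachable u (e' i).2 :=
            ⟨fun h => h.trans hadj'.reachable, fun h => h.trans hadj'.symm.reachable⟩
          show (if G'.Reachable u (e' i).1 then -f (e' i).1 else f (e' i).1) *
            (if G'.Reachable u (e' i).2 then -f (e' i).2 else f (e' i).2) = σ i.castSucc
          by_cases hr : G'.Reachable u (e' i).1
          · rw [if_pos hr, if_pos (hiff.mp hr)]
            rw [neg_mul_neg]; exact hf2 i
          · rw [if_neg hr, if_neg (fun h => hr (hiff.mpr h))]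
            exact hf2 i


/-- Restricted column scaling: with `[I_r | D₁]` over `F`
representing a matroid and `b 0, …, b (k-1)` the edges of a spanning forest of
`G(D₁^#)` (a maximal acyclic set of nonzero positions of `D₁`), if `φ` is a
tuple of nonzero elements with the entry of `D₁` at `b l` equal to `± φ l`,
then `[I_r | D₁]` can be transformed, by row scalings and column scalings all
restricted to the factors `±1` (the only scalings that preserve the standard
form `[I_r | D']`), into a matrix whose entry at `b l` is `φ l` for each `l`. -/
theorem restricted_brylawski_lucas
    {F : Type*} [Field F] {r s k : ℕ} (D₁ : Matrix (Fin r) (Fin s) F)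
    (b : Fin k → Fin r × Fin s) (hb : Function.Injective b)
    (hforest : Maximal (fun t : Set (Fin r × Fin s) =>
        (∀ p ∈ t, D₁ p.1 p.2 ≠ 0) ∧
        (SimpleGraph.fromEdgeSet
          ((fun p : Fin r × Fin s => s(Sum.inl p.1, Sum.inr p.2)) '' t :
            Set (Sym2 (Fin r ⊕ Fin s)))).IsAcyclic)
      (Set.range b))
    (φ : Fin k → F) (hφ0 : ∀ l, φ l ≠ 0)
    (hφ : ∀ l, D₁ (b l).1 (b l).2 = φ l ∨ D₁ (b l).1 (b l).2 = -φ l) :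
    ∃ (ρ : Fin r → F) (γ : Fin s → F),
      (∀ i, ρ i = 1 ∨ ρ i = -1) ∧ (∀ j, γ j = 1 ∨ γ j = -1) ∧
      ∀ l, ρ (b l).1 * D₁ (b l).1 (b l).2 * γ (b l).2 = φ l := by
  classical
  have hne : ∀ l : Fin k, (Sum.inl (b l).1 : Fin r ⊕ Fin s) ≠ Sum.inr (b l).2 :=
    fun l h => Sum.inl_ne_inr h
  have hinj : Function.Injective
      (fun l : Fin k => s((Sum.inl (b l).1 : Fin r ⊕ Fin s), Sum.inr (b l).2)) := by
    intro a c h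
    simp only [Sym2.eq, Sym2.rel_iff', Prod.mk.injEq, Sum.inl.injEq, Sum.inr.injEq,
      reduceCtorEq, false_and, and_false, or_false] at h
    rcases h with ⟨h1, h2⟩ | h
    · exact hb (Prod.ext h1 h2)
    · exact absurd (congrArg Prod.fst h) (by simp [Prod.swap])
  have hacy : (SimpleGraph.fromEdgeSet (Set.range fun l : Fin k =>
      s((Sum.inl (b l).1 : Fin r ⊕ Fin s), Sum.inr (b l).2))).IsAcyclic := by
    have : (Set.range fun l : Fin k =>
        s((Sum.inl (b l).1 : Fin r ⊕ Fin s), Sum.inr (b l).2)) =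
        ((fun p : Fin r × Fin s => s(Sum.inl p.1, Sum.inr p.2)) '' Set.range b) := by
      rw [← Set.range_comp]
      rfl
    rw [this]
    exact hforest.1.2
  set σ : Fin k → F := fun l => if D₁ (b l).1 (b l).2 = φ l then 1 else -1 with hσdef
  obtain ⟨f, hf1, hf2⟩ := aux_sign k
    (fun l => ((Sum.inl (b l).1 : Fin r ⊕ Fin s), Sum.inr (b l).2))
    hne hinj hacy σ (fun l => by by_cases h : D₁ (b l).1 (b l).2 = φ l <;> simp [hσdef, h])
  refine ⟨fun i => f (Sum.inl i), fun j => f (Sum.inr j),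
    fun i => hf1 _, fun j => hf1 _, fun l => ?_⟩
  have h2 := hf2 l
  by_cases h : D₁ (b l).1 (b l).2 = φ l
  · have : σ l = 1 := by simp [hσdef, h]
    rw [this] at h2
    calc f (Sum.inl (b l).1) * D₁ (b l).1 (b l).2 * f (Sum.inr (b l).2)
        = f (Sum.inl (b l).1) * f (Sum.inr (b l).2) * D₁ (b l).1 (b l).2 := by ring
      _ = φ l := by rw [h2, one_mul, h]
  · have hD : D₁ (b l).1 (b l).2 = -φ l := (hφ l).resolve_left h
    have : σ l = -1 := by simp [hσdef, h]
    rw [this] at h2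
    calc f (Sum.inl (b l).1) * D₁ (b l).1 (b l).2 * f (Sum.inr (b l).2)
        = f (Sum.inl (b l).1) * f (Sum.inr (b l).2) * D₁ (b l).1 (b l).2 := by ring
      _ = φ l := by rw [h2, hD]; ring
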